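/- arXiv:2212.02558 — 4 statements merged into one kernel-verified Lean document; each statement's English description precedes it below -/
import Mathlib

section
/- Let d ≥ 3 and 1 ≤ k ≤ ⌈(d−2)/2⌉ be integers and let p be an IDF prime for (d,k). Let α, β be rational numbers with α ≠ 0, v_p(α) < 0, and β p-integral (β = 0 or v_p(β) ≥ 0). Then for every integer n ≥ 1 the orbit value f^n_{α,β}(1) is nonzero with v_p(f^n_{α,β}(1)) < 0, and v_p(f^{n+1}_{α,β}(1)) < v_p(f^n_{α,β}(1)); in particular, the critical point 1 is not periodic under f_{α,β} (f^n_{α,β}(1) ≠ 1 for all n ≥ 1). -/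
open Finset Function

/-- The coefficient `b_i` of `z^(d-i)` in the normalized dynamical Belyi polynomial
`B_{d,k}`. -/
def belyiCoeff (d k i : ℕ) : ℚ :=
  ((-1 : ℚ) ^ (k - i) / ((k - i).factorial * i.factorial)) *
    ∏ j ∈ (Finset.range (k + 1)).erase i, ((d : ℚ) - (j : ℚ))

/-- The normalized dynamical Belyi polynomial `B_{d,k}` as a function on `ℚ`. -/
def belyi (d k : ℕ) (z : ℚ) : ℚ :=
  ∑ i ∈ Finset.range (k + 1), belyiCoeff d k i * z ^ (d - i)

/-- The map `f_{a,c}(z) = a · B_{d,k}(z) + c`. -/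
def belyiMap (d k : ℕ) (a c z : ℚ) : ℚ := a * belyi d k z + c

/-- `p` is an index divisor free (IDF) prime for the pair `(d,k)`:
`p` is a prime with `p > k`, `p ∣ d - r` for some `r ≤ k`, and `r ∤ v_p(d-r)`. -/
def IsIDFPrime (d k p : ℕ) : Prop :=
  p.Prime ∧ k < p ∧ ∃ r ≤ k, p ∣ (d - r) ∧ ¬ (r ∣ padicValNat p (d - r))

/-- A rational number is `p`-integral if it is zero or has nonnegative `p`-adic valuation. -/
def PIntegral (p : ℕ) (x : ℚ) : Prop := x = 0 ∨ 0 ≤ padicValRat p x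

namespace BelyiAux

variable {p : ℕ} [hp : Fact p.Prime]

lemma val_add_eq {x y : ℚ} (hx : x ≠ 0) (hy : y ≠ 0)
    (h : padicValRat p x < padicValRat p y) :
    x + y ≠ 0 ∧ padicValRat p (x + y) = padicValRat p x := by
  have hxy : x + y ≠ 0 := by
    intro h0
    have hyx : y = -x := by linarith
    rw [hyx, padicValRat.neg] at h
    exact lt_irrefl _ h
  exact ⟨hxy, padicValRat.add_eq_of_lt hxy hx hy h⟩

lemma val_sum_ge {s : Finset ℕ} {f : ℕ → ℚ} {m : ℤ}
    (h : ∀ i ∈ s, f i = 0 ∨ m ≤ padicValRat p (f i)) :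
    (∑ i ∈ s, f i) = 0 ∨ m ≤ padicValRat p (∑ i ∈ s, f i) := by
  classical
  induction s using Finset.induction_on with
  | empty => left; simp
  | @insert a s ha ih =>
    rw [Finset.sum_insert ha]
    have ih' := ih fun i hi => h i (Finset.mem_insert_of_mem hi)
    rcases h a (Finset.mem_insert_self a s) with h0 | hm
    · rw [h0, zero_add]; exact ih'
    · rcases ih' with hs0 | hsm
      · rw [hs0, add_zero]; right; exact hm
      · by_cases hsum : f a + ∑ i ∈ s, f i = 0
        · left; exact hsum
        · right
          exact le_trans (le_min hm hsm) (padicValRat.min_le_padicValRat_add hsum)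

lemma val_prod {s : Finset ℕ} {f : ℕ → ℚ} (h : ∀ i ∈ s, f i ≠ 0) :
    padicValRat p (∏ i ∈ s, f i) = ∑ i ∈ s, padicValRat p (f i) := by
  classical
  induction s using Finset.induction_on with
  | empty => simp
  | @insert a s ha ih =>
    rw [Finset.prod_insert ha, Finset.sum_insert ha,
      padicValRat.mul (h a (Finset.mem_insert_self a s))
        (Finset.prod_ne_zero_iff.mpr fun i hi => h i (Finset.mem_insert_of_mem hi)),
      ih fun i hi => h i (Finset.mem_insert_of_mem hi)]

lemma not_dvd_aux {d k p r : ℕ} (hkp : k < p) (hkd : k < d) (hr : r ≤ k) (hpr : p ∣ d - r)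
    {j : ℕ} (hj : j ≤ k) (hjr : j ≠ r) : ¬ p ∣ (d - j) := by
  intro hdvd
  rcases Nat.lt_or_ge j r with hlt | hge
  · have h1 : p ∣ r - j := by
      have h2 := Nat.dvd_sub hdvd hpr
      rwa [show d - j - (d - r) = r - j by omega] at h2
    have := Nat.le_of_dvd (by omega) h1
    omega
  · have hlt : r < j := by omega
    have h1 : p ∣ j - r := by
      have h2 := Nat.dvd_sub hpr hdvd
      rwa [show d - r - (d - j) = j - r by omega] at h2
    have := Nat.le_of_dvd (by omega) h1
    omega

lemma coeff_val {d k r : ℕ} (hkp : k < p) (hkd : k < d) (hr : r ≤ k)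
    (hpr : p ∣ d - r) {i : ℕ} (hi : i ≤ k) :
    belyiCoeff d k i ≠ 0 ∧
      padicValRat p (belyiCoeff d k i) =
        if i = r then 0 else (padicValNat p (d - r) : ℤ) := by
  have hfac : ∀ j ∈ (Finset.range (k + 1)).erase i, ((d : ℚ) - (j : ℚ)) ≠ 0 := by
    intro j hj
    have hjk : j ≤ k := by
      have := Finset.mem_range.mp (Finset.mem_of_mem_erase hj); omega
    have hjd : (j : ℚ) ≠ (d : ℚ) := by exact_mod_cast (show j ≠ d by omega)
    intro h0
    exact hjd (by linarith)
  have hprodne : (∏ j ∈ (Finset.range (k + 1)).erase i, ((d : ℚ) - (j : ℚ))) ≠ 0 :=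
    Finset.prod_ne_zero_iff.mpr hfac
  have hfactne : (((k - i).factorial : ℚ) * (i.factorial : ℚ)) ≠ 0 := by
    positivity
  have hc1ne : ((-1 : ℚ) ^ (k - i) / (((k - i).factorial : ℚ) * (i.factorial : ℚ))) ≠ 0 :=
    div_ne_zero (pow_ne_zero _ (by norm_num)) hfactne
  refine ⟨mul_ne_zero hc1ne hprodne, ?_⟩
  rw [belyiCoeff, padicValRat.mul hc1ne hprodne]
  have hv1 : padicValRat p
      ((-1 : ℚ) ^ (k - i) / (((k - i).factorial : ℚ) * (i.factorial : ℚ))) = 0 := by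
    rw [padicValRat.div (pow_ne_zero _ (by norm_num)) hfactne,
      padicValRat.pow (-1 : ℚ)]
    have hneg1 : padicValRat p (-1 : ℚ) = 0 := by
      rw [show (-1 : ℚ) = -(1 : ℚ) by norm_num, padicValRat.neg, padicValRat.one]
    have hnd : ¬ p ∣ (k - i).factorial * i.factorial := by
      intro hdvd
      rcases (Nat.Prime.dvd_mul hp.out).mp hdvd with h' | h'
      · have := (Nat.Prime.dvd_factorial hp.out).mp h'; omega
      · have := (Nat.Prime.dvd_factorial hp.out).mp h'; omega
    have : padicValRat p (((k - i).factorial : ℚ) * (i.factorial : ℚ)) = 0 := by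
      rw [← Nat.cast_mul, padicValRat.of_nat, padicValNat.eq_zero_of_not_dvd hnd]
      norm_num
    rw [hneg1, this]
    ring
  rw [hv1, zero_add, val_prod hfac]
  have hvfac : ∀ j, j ≤ k → padicValRat p ((d : ℚ) - (j : ℚ)) = (padicValNat p (d - j) : ℤ) := by
    intro j hjk
    have hjd : j ≤ d := by omega
    rw [show (d : ℚ) - (j : ℚ) = ((d - j : ℕ) : ℚ) by push_cast [Nat.cast_sub hjd]; ring,
      padicValRat.of_nat]
  by_cases hir : i = r
  · rw [if_pos hir]
    apply Finset.sum_eq_zero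
    intro j hj
    have hjk : j ≤ k := by
      have := Finset.mem_range.mp (Finset.mem_of_mem_erase hj); omega
    have hjr : j ≠ r := by
      have := Finset.ne_of_mem_erase hj; rw [hir] at this; exact this
    rw [hvfac j hjk, padicValNat.eq_zero_of_not_dvd (not_dvd_aux hkp hkd hr hpr hjk hjr)]
    norm_num
  · rw [if_neg hir]
    have hrmem : r ∈ (Finset.range (k + 1)).erase i :=
      Finset.mem_erase.mpr ⟨fun h => hir h.symm, Finset.mem_range.mpr (by omega)⟩
    rw [Finset.sum_eq_single_of_mem r hrmem]
    · exact hvfac r hr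
    · intro j hj hjr
      have hjk : j ≤ k := by
        have := Finset.mem_range.mp (Finset.mem_of_mem_erase hj); omega
      rw [hvfac j hjk, padicValNat.eq_zero_of_not_dvd (not_dvd_aux hkp hkd hr hpr hjk hjr)]
      norm_num

lemma belyi_one_val {d k r : ℕ} (hkp : k < p) (hkd : k < d) (hr : r ≤ k)
    (hpr : p ∣ d - r) :
    belyi d k 1 ≠ 0 ∧ padicValRat p (belyi d k 1) = 0 := by
  have hrmem : r ∈ Finset.range (k + 1) := Finset.mem_range.mpr (by omega)
  have hE1 : (1 : ℤ) ≤ (padicValNat p (d - r) : ℤ) := by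
    exact_mod_cast one_le_padicValNat_of_dvd (by omega) hpr
  have hb : belyi d k 1 = belyiCoeff d k r +
      ∑ i ∈ (Finset.range (k + 1)).erase r, belyiCoeff d k i := by
    rw [belyi]
    simp only [one_pow, mul_one]
    exact (Finset.add_sum_erase _ _ hrmem).symm
  have hcr := coeff_val (p := p) hkp hkd hr hpr hr
  rw [if_pos rfl] at hcr
  by_cases hS0 : ∑ i ∈ (Finset.range (k + 1)).erase r, belyiCoeff d k i = 0
  · rw [hb, hS0, add_zero]; exact ⟨hcr.1, hcr.2⟩
  · have hSm : (1 : ℤ) ≤ padicValRat p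
        (∑ i ∈ (Finset.range (k + 1)).erase r, belyiCoeff d k i) := by
      refine ((val_sum_ge (fun i hi => ?_)).resolve_left hS0)
      right
      have hik : i ≤ k := by
        have := Finset.mem_range.mp (Finset.mem_of_mem_erase hi); omega
      have hir : i ≠ r := Finset.ne_of_mem_erase hi
      rw [(coeff_val (p := p) hkp hkd hr hpr hik).2, if_neg hir]
      exact hE1
    have h := val_add_eq hcr.1 hS0 (by rw [hcr.2]; omega)
    rw [hb]
    exact ⟨h.1, by rw [h.2, hcr.2]⟩

lemma belyi_val_at {d k r : ℕ} (hkp : k < p) (hkd : k < d) (hr : r ≤ k)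
    (hpr : p ∣ d - r) (hidf : ¬ r ∣ padicValNat p (d - r))
    {z : ℚ} (hz : z ≠ 0) (hvz : padicValRat p z < 0) :
    belyi d k z ≠ 0 ∧
      padicValRat p (belyi d k z) ≤ ((d : ℤ) - (r : ℤ)) * padicValRat p z := by
  set v : ℤ := padicValRat p z with hv
  set E : ℤ := (padicValNat p (d - r) : ℤ) with hEdef
  have hE1 : (1 : ℤ) ≤ E := by
    rw [hEdef]
    exact_mod_cast one_le_padicValNat_of_dvd (by omega) hpr
  have hrmem : r ∈ Finset.range (k + 1) := Finset.mem_range.mpr (by omega)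
  set t : ℕ → ℚ := fun i => belyiCoeff d k i * z ^ (d - i) with htdef
  have hsplit : belyi d k z = t r + ∑ i ∈ (Finset.range (k + 1)).erase r, t i := by
    rw [belyi]
    exact (Finset.add_sum_erase _ t hrmem).symm
  have hterm : ∀ i, i ≤ k → t i ≠ 0 ∧
      padicValRat p (t i) = (if i = r then 0 else E) + ((d : ℤ) - (i : ℤ)) * v := by
    intro i hik
    have hc := coeff_val (p := p) hkp hkd hr hpr hik
    have hzp : z ^ (d - i) ≠ 0 := pow_ne_zero _ hz
    refine ⟨mul_ne_zero hc.1 hzp, ?_⟩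
    rw [htdef]
    simp only []
    rw [padicValRat.mul hc.1 hzp, hc.2, padicValRat.pow z]
    have : ((d - i : ℕ) : ℤ) = (d : ℤ) - (i : ℤ) := by
      have : i ≤ d := by omega
      push_cast [Nat.cast_sub this]; ring
    rw [this, ← hv]
  have htr := hterm r hr
  rw [if_pos rfl, zero_add] at htr
  by_cases hc : ((d : ℤ) - (r : ℤ)) * v < E + (d : ℤ) * v
  · -- the term `t r` strictly dominates the rest
    have hbound : ∀ i ∈ (Finset.range (k + 1)).erase r, t i = 0 ∨
        E + (d : ℤ) * v ≤ padicValRat p (t i) := by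
      intro i hi
      right
      have hik : i ≤ k := by
        have := Finset.mem_range.mp (Finset.mem_of_mem_erase hi); omega
      have hir : i ≠ r := Finset.ne_of_mem_erase hi
      rw [(hterm i hik).2, if_neg hir]
      have hile : (0 : ℤ) ≤ (i : ℤ) := Int.natCast_nonneg i
      nlinarith
    by_cases hS0 : ∑ i ∈ (Finset.range (k + 1)).erase r, t i = 0
    · rw [hsplit, hS0, add_zero]
      exact ⟨htr.1, le_of_eq htr.2⟩
    · have hSm := (val_sum_ge hbound).resolve_left hS0
      have h := val_add_eq htr.1 hS0 (by rw [htr.2]; linarith)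
      rw [hsplit]
      exact ⟨h.1, by rw [h.2, htr.2]⟩
  · -- the term `t 0` strictly dominates everything
    have hne : ((d : ℤ) - (r : ℤ)) * v ≠ E + (d : ℤ) * v := by
      intro heq
      have hEr : E = (r : ℤ) * (-v) := by nlinarith
      have hdvd : (r : ℤ) ∣ E := Dvd.intro _ hEr.symm
      rw [hEdef] at hdvd
      exact hidf (by exact_mod_cast hdvd)
    have hlt : E + (d : ℤ) * v < ((d : ℤ) - (r : ℤ)) * v :=
      lt_of_le_of_ne (not_lt.mp hc) (Ne.symm hne)
    have hr1 : 1 ≤ r := by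
      by_contra h0
      have hr0 : r = 0 := by omega
      rw [hr0] at hlt
      push_cast at hlt
      linarith
    have h0mem : (0 : ℕ) ∈ (Finset.range (k + 1)).erase r :=
      Finset.mem_erase.mpr ⟨by omega, Finset.mem_range.mpr (by omega)⟩
    have hsplit2 : ∑ i ∈ (Finset.range (k + 1)).erase r, t i =
        t 0 + ∑ i ∈ ((Finset.range (k + 1)).erase r).erase 0, t i :=
      (Finset.add_sum_erase _ t h0mem).symm
    have ht0 := hterm 0 (by omega)
    rw [if_neg (by omega)] at ht0
    have ht0v : padicValRat p (t 0) = E + (d : ℤ) * v := by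
      rw [ht0.2]; push_cast; ring
    have hbound : ∀ i ∈ ((Finset.range (k + 1)).erase r).erase 0, t i = 0 ∨
        E + ((d : ℤ) - 1) * v ≤ padicValRat p (t i) := by
      intro i hi
      right
      have hi' := Finset.mem_of_mem_erase hi
      have hik : i ≤ k := by
        have := Finset.mem_range.mp (Finset.mem_of_mem_erase hi'); omega
      have hir : i ≠ r := Finset.ne_of_mem_erase hi'
      have hi1 : 1 ≤ i := by
        have := Finset.ne_of_mem_erase hi; omega
      rw [(hterm i hik).2, if_neg hir]
      have hile : (1 : ℤ) ≤ (i : ℤ) := by exact_mod_cast hi1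
      nlinarith
    have hSval : (∑ i ∈ (Finset.range (k + 1)).erase r, t i) ≠ 0 ∧
        padicValRat p (∑ i ∈ (Finset.range (k + 1)).erase r, t i) = E + (d : ℤ) * v := by
      by_cases hT0 : ∑ i ∈ ((Finset.range (k + 1)).erase r).erase 0, t i = 0
      · rw [hsplit2, hT0, add_zero]
        exact ⟨ht0.1, ht0v⟩
      · have hTm := (val_sum_ge hbound).resolve_left hT0
        have h := val_add_eq ht0.1 hT0 (by rw [ht0v]; linarith)
        rw [hsplit2]
        exact ⟨h.1, by rw [h.2, ht0v]⟩
    have h := val_add_eq hSval.1 htr.1 (by rw [hSval.2, htr.2]; exact hlt)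
    rw [hsplit, add_comm]
    exact ⟨h.1, by rw [h.2, hSval.2]; linarith⟩

lemma map_val {α β B : ℚ} (hα : α ≠ 0) (hvα : padicValRat p α < 0)
    (hβ : PIntegral p β) (hB : B ≠ 0) (hvB : padicValRat p B ≤ 0) :
    α * B + β ≠ 0 ∧ padicValRat p (α * B + β) = padicValRat p α + padicValRat p B := by
  have hαB : α * B ≠ 0 := mul_ne_zero hα hB
  have hvm : padicValRat p (α * B) = padicValRat p α + padicValRat p B :=
    padicValRat.mul hα hB
  by_cases hβ0 : β = 0
  · subst hβ0; rw [add_zero]; exact ⟨hαB, hvm⟩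
  · have hβv : 0 ≤ padicValRat p β := hβ.resolve_left hβ0
    have h := val_add_eq hαB hβ0 (by rw [hvm]; linarith)
    exact ⟨h.1, h.2.trans hvm⟩

end BelyiAux

/-- (Case 2 of the integrality proof.)  If `v_p(α) < 0` and `β` is
`p`-integral, then the valuation of the orbit of `1` is negative and strictly
decreasing; in particular `1` is not periodic. -/
theorem orbit_of_one_val_strict_anti (d k p : ℕ) (hd : 3 ≤ d) (hk1 : 1 ≤ k)
    (hk2 : k ≤ (d - 1) / 2) (hp : IsIDFPrime d k p)
    (α β : ℚ) (hα : α ≠ 0) (hvα : padicValRat p α < 0) (hβ : PIntegral p β) :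
    ∀ n : ℕ, 1 ≤ n →
      (belyiMap d k α β)^[n] 1 ≠ 0 ∧
      padicValRat p ((belyiMap d k α β)^[n] 1) < 0 ∧
      padicValRat p ((belyiMap d k α β)^[n + 1] 1) <
        padicValRat p ((belyiMap d k α β)^[n] 1) ∧
      (belyiMap d k α β)^[n] 1 ≠ 1 := by
  obtain ⟨hpp, hkp, r, hrk, hpr, hidf⟩ := hp
  haveI : Fact p.Prime := ⟨hpp⟩
  have hkd : k < d := by omega
  have hdr2 : (2 : ℤ) ≤ (d : ℤ) - (r : ℤ) := by
    have : r + 2 ≤ d := by omega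
    omega
  have hstep : ∀ z : ℚ, z ≠ 0 → padicValRat p z < 0 →
      (belyiMap d k α β z ≠ 0 ∧
        padicValRat p (belyiMap d k α β z) < padicValRat p z ∧
        padicValRat p (belyiMap d k α β z) < 0) := by
    intro z hz hvz
    obtain ⟨hB, hvB⟩ := BelyiAux.belyi_val_at hkp hkd hrk hpr hidf hz hvz
    have hvB0 : padicValRat p (belyi d k z) ≤ 0 := by nlinarith
    obtain ⟨hfz, hvfz⟩ := BelyiAux.map_val hα hvα hβ hB hvB0
    have hmap : belyiMap d k α β z = α * belyi d k z + β := rfl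
    rw [hmap]
    have h1 : ((d : ℤ) - (r : ℤ)) * padicValRat p z ≤ 2 * padicValRat p z := by nlinarith
    exact ⟨hfz, by rw [hvfz]; linarith, by rw [hvfz]; linarith⟩
  have key : ∀ n : ℕ, (belyiMap d k α β)^[n + 1] 1 ≠ 0 ∧
      padicValRat p ((belyiMap d k α β)^[n + 1] 1) < 0 := by
    intro n
    induction n with
    | zero =>
      obtain ⟨hB1, hvB1⟩ := BelyiAux.belyi_one_val (p := p) hkp hkd hrk hpr
      obtain ⟨h1, h2⟩ := BelyiAux.map_val hα hvα hβ hB1 (le_of_eq hvB1)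
      have hmap : belyiMap d k α β 1 = α * belyi d k 1 + β := rfl
      simp only [zero_add, iterate_one]
      rw [hmap]
      exact ⟨h1, by rw [h2, hvB1]; linarith⟩
    | succ m ih =>
      rw [iterate_succ_apply']
      obtain ⟨h1, _, h3⟩ := hstep _ ih.1 ih.2
      exact ⟨h1, h3⟩
  intro n hn
  obtain ⟨m, rfl⟩ : ∃ m, n = m + 1 := ⟨n - 1, by omega⟩
  obtain ⟨hz, hv⟩ := key m
  obtain ⟨_, hdec, _⟩ := hstep _ hz hv
  refine ⟨hz, hv, ?_, ?_⟩
  · rw [iterate_succ_apply']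
    exact hdec
  · intro h1
    rw [h1, padicValRat.one] at hv
    exact lt_irrefl 0 hv
end

section
/- Let K be an algebraically closed field of characteristic 0 and let g ∈ K[z] be a bicritical polynomial of degree d ≥ 3 (i.e., the derivative g′ has exactly two distinct roots in K). Then there exist an integer k with 1 ≤ k ≤ ⌈(d−2)/2⌉, elements a, c ∈ K with a ≠ 0, and an affine map φ(z) = u·z + v with u, v ∈ K, u ≠ 0, such that g(φ(z)) = φ(a·B_{d,k}(z) + c) for all z ∈ K; that is, g is conjugate to a·B_{d,k}(z) + c, where B_{d,k} is viewed in K[z] via the embedding ℚ ↪ K. -/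
open Finset Function

/-- The normalized dynamical Belyi polynomial `B_{d,k}` as a function on a field `K` of
characteristic zero, via the embedding `ℚ ↪ K`. -/
def belyiK (K : Type*) [Field K] [CharZero K] (d k : ℕ) (z : K) : K :=
  ∑ i ∈ Finset.range (k + 1), ((belyiCoeff d k i : ℚ) : K) * z ^ (d - i)

open Polynomial

def belyiDerivCoeff (d k : ℕ) : ℚ :=
  (-1 : ℚ) ^ k * (∏ j ∈ Finset.range (k + 1), ((d : ℚ) - (j : ℚ))) / (k.factorial : ℚ)

lemma belyi_coeff_identity (d k i : ℕ) (hi : i ≤ k) :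
    belyiCoeff d k i * ((d : ℚ) - i)
      = belyiDerivCoeff d k * ((-1 : ℚ)) ^ i * (k.choose i : ℚ) := by
  have hmem : i ∈ Finset.range (k + 1) := Finset.mem_range.2 (Nat.lt_succ_of_le hi)
  have hprod : ((d : ℚ) - i) * ∏ j ∈ (Finset.range (k + 1)).erase i, ((d : ℚ) - (j : ℚ))
      = ∏ j ∈ Finset.range (k + 1), ((d : ℚ) - (j : ℚ)) :=
    Finset.mul_prod_erase _ (fun j : ℕ => ((d : ℚ) - (j : ℚ))) hmem
  have hsq : ((-1 : ℚ)) ^ i * (-1 : ℚ) ^ i = 1 := by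
    rw [← pow_add]; exact Even.neg_one_pow ⟨i, rfl⟩
  have hsign : ((-1 : ℚ)) ^ (k - i) = (-1 : ℚ) ^ k * (-1 : ℚ) ^ i := by
    calc ((-1:ℚ)) ^ (k-i) = (-1:ℚ)^(k-i) * ((-1:ℚ)^i * (-1:ℚ)^i) := by rw [hsq, mul_one]
      _ = ((-1:ℚ)^(k-i) * (-1:ℚ)^i) * (-1:ℚ)^i := by ring
      _ = (-1:ℚ)^k * (-1:ℚ)^i := by rw [← pow_add, Nat.sub_add_cancel hi]
  have hfact : ((k.choose i : ℚ)) * (i.factorial : ℚ) * ((k - i).factorial : ℚ)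
      = (k.factorial : ℚ) := by exact_mod_cast Nat.choose_mul_factorial_mul_factorial hi
  have h1 : ((k - i).factorial : ℚ) ≠ 0 := Nat.cast_ne_zero.2 (Nat.factorial_ne_zero _)
  have h2 : ((i).factorial : ℚ) ≠ 0 := Nat.cast_ne_zero.2 (Nat.factorial_ne_zero _)
  have h3 : ((k).factorial : ℚ) ≠ 0 := Nat.cast_ne_zero.2 (Nat.factorial_ne_zero _)
  unfold belyiCoeff belyiDerivCoeff
  rw [hsign, ← hprod]
  field_simp
  linear_combination (-((d:ℚ)-i) *
    (∏ j ∈ (Finset.range (k + 1)).erase i, ((d : ℚ) - (j : ℚ)))) * hfact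


noncomputable def belyiPolyQ (d k : ℕ) : Polynomial ℚ :=
  ∑ i ∈ Finset.range (k + 1), Polynomial.C (belyiCoeff d k i) * Polynomial.X ^ (d - i)

lemma belyiPolyQ_derivative (d k : ℕ) (hk : k + 2 ≤ d) :
    Polynomial.derivative (belyiPolyQ d k)
      = Polynomial.C (belyiDerivCoeff d k) * Polynomial.X ^ (d - 1 - k)
          * (Polynomial.X - 1) ^ k := by
  have hX : (Polynomial.X - 1 : Polynomial ℚ) ^ k
      = ∑ m ∈ Finset.range (k + 1),
          Polynomial.X ^ m * (-1 : Polynomial ℚ) ^ (k - m) * (k.choose m : Polynomial ℚ) := by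
    rw [sub_eq_add_neg, add_pow]
  rw [hX, Finset.mul_sum]
  unfold belyiPolyQ
  rw [derivative_sum]
  rw [← Finset.sum_range_reflect (fun m => Polynomial.C (belyiDerivCoeff d k) * Polynomial.X ^ (d - 1 - k) *
      (Polynomial.X ^ m * (-1 : Polynomial ℚ) ^ (k - m) * (k.choose m : Polynomial ℚ))) (k+1)]
  refine Finset.sum_congr rfl fun i hi => ?_
  have hik : i ≤ k := Nat.lt_succ_iff.mp (Finset.mem_range.mp hi)
  have e1 : k + 1 - 1 - i = k - i := by omega
  have e2 : k - (k - i) = i := by omega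
  have e3 : k.choose (k - i) = k.choose i := Nat.choose_symm hik
  rw [e1, e2, e3]
  rw [derivative_C_mul, derivative_X_pow]
  have e4 : d - 1 - k + (k - i) = d - i - 1 := by omega
  have e5 : ((d - i : ℕ) : ℚ) = (d : ℚ) - (i : ℚ) := by
    have : i ≤ d := by omega
    push_cast [this]; ring
  have key := belyi_coeff_identity d k i hik
  calc Polynomial.C (belyiCoeff d k i) * (Polynomial.C ((d - i : ℕ) : ℚ) * Polynomial.X ^ (d - i - 1))
      = Polynomial.C (belyiCoeff d k i * ((d:ℚ) - i)) * Polynomial.X ^ (d - i - 1) := by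
        rw [Polynomial.C_mul, e5]; ring
    _ = Polynomial.C (belyiDerivCoeff d k * ((-1:ℚ))^i * (k.choose i : ℚ)) * Polynomial.X ^ (d - i - 1) := by rw [key]
    _ = _ := by
        rw [Polynomial.C_mul, Polynomial.C_mul, ← e4, pow_add]
        simp [Polynomial.C_eq_natCast]
        ring


lemma belyiDerivCoeff_ne_zero (d k : ℕ) (hk : k < d) : belyiDerivCoeff d k ≠ 0 := by
  unfold belyiDerivCoeff
  apply div_ne_zero
  · apply mul_ne_zero (pow_ne_zero _ (by norm_num))
    refine Finset.prod_ne_zero_iff.2 fun j hj => ?_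
    have hj' : j ≤ k := Nat.lt_succ_iff.mp (Finset.mem_range.mp hj)
    have hjd : (j : ℚ) < (d : ℚ) := by exact_mod_cast lt_of_le_of_lt hj' hk
    exact sub_ne_zero.2 (ne_of_gt hjd)
  · exact Nat.cast_ne_zero.2 (Nat.factorial_ne_zero _)

lemma belyiPolyK_eval (K : Type*) [Field K] [CharZero K] (d k : ℕ) (z : K) :
    ((belyiPolyQ d k).map (algebraMap ℚ K)).eval z = belyiK K d k z := by
  unfold belyiPolyQ belyiK
  rw [Polynomial.map_sum, Polynomial.eval_finset_sum]
  refine Finset.sum_congr rfl fun i _ => ?_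
  simp [eq_ratCast]

lemma belyi_aux (K : Type*) [Field K] [CharZero K]
    (d : ℕ) (hd : 3 ≤ d) (g : Polynomial K) (γ₁ γ₂ lc : K) (hlc : lc ≠ 0)
    (hne : γ₂ - γ₁ ≠ 0)
    (k : ℕ) (hk1 : 1 ≤ k) (hk2 : 2 * k ≤ d - 1)
    (hg' : Polynomial.derivative g
      = Polynomial.C lc * ((Polynomial.X - Polynomial.C γ₁) ^ (d - 1 - k)
          * (Polynomial.X - Polynomial.C γ₂) ^ k)) :
    ∃ a c u v : K, a ≠ 0 ∧ u ≠ 0 ∧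
      ∀ z : K, g.eval (u * z + v) = u * (a * belyiK K d k z + c) + v := by
  have hkd : k + 2 ≤ d := by omega
  set u : K := γ₂ - γ₁ with hu
  set B : Polynomial K := (belyiPolyQ d k).map (algebraMap ℚ K) with hBdef
  set c₀ : K := ((belyiDerivCoeff d k : ℚ) : K) with hc₀def
  have hc0 : c₀ ≠ 0 := by
    rw [hc₀def]
    exact_mod_cast Rat.cast_ne_zero.mpr (belyiDerivCoeff_ne_zero d k (by omega))
  set a : K := lc * u ^ (d - 1) / c₀ with ha
  set c : K := (g.eval γ₁ - γ₁) / u with hc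
  have ha0 : a ≠ 0 := div_ne_zero (mul_ne_zero hlc (pow_ne_zero _ hne)) hc0
  have hdB : Polynomial.derivative B
      = Polynomial.C c₀ * Polynomial.X ^ (d - 1 - k) * (Polynomial.X - 1) ^ k := by
    rw [hBdef, Polynomial.derivative_map, belyiPolyQ_derivative d k hkd]
    simp only [Polynomial.map_mul, Polynomial.map_pow, Polynomial.map_sub, Polynomial.map_C,
      Polynomial.map_X, Polynomial.map_one]
    rfl
  have hφ1 : (Polynomial.C u * Polynomial.X + Polynomial.C γ₁ - Polynomial.C γ₁ : Polynomial K)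
      = Polynomial.C u * Polynomial.X := by ring
  have hφ2 : (Polynomial.C u * Polynomial.X + Polynomial.C γ₁ - Polynomial.C γ₂ : Polynomial K)
      = Polynomial.C u * (Polynomial.X - 1) := by
    rw [hu]; push_cast [Polynomial.C_sub]; ring
  have e : d - 1 - k + k + 1 = d := by omega
  have hcomp : Polynomial.derivative
        (g.comp (Polynomial.C u * Polynomial.X + Polynomial.C γ₁))
      = Polynomial.C (lc * u ^ d)
          * (Polynomial.X ^ (d - 1 - k) * (Polynomial.X - 1) ^ k) := by
    rw [Polynomial.derivative_comp, hg']
    simp only [Polynomial.derivative_add, Polynomial.derivative_mul, Polynomial.derivative_C,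
      Polynomial.derivative_X, Polynomial.mul_comp, Polynomial.pow_comp, Polynomial.sub_comp,
      Polynomial.X_comp, Polynomial.C_comp, zero_mul, mul_one, zero_add, add_zero]
    rw [hφ1, hφ2, mul_pow, mul_pow]
    have hpow : (Polynomial.C u : Polynomial K) ^ (d - 1 - k) * Polynomial.C u ^ k
        * Polynomial.C u = Polynomial.C u ^ d := by
      rw [← pow_add, ← pow_succ, e]
    have hd' : (Polynomial.C (lc * u ^ d) : Polynomial K)
        = Polynomial.C lc * (Polynomial.C u ^ (d - 1 - k) * Polynomial.C u ^ k
            * Polynomial.C u) := by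
      rw [hpow, Polynomial.C_mul, Polynomial.C_pow]
    rw [hd']; ring
  have hQ : Polynomial.derivative
        (Polynomial.C u * (Polynomial.C a * B + Polynomial.C c) + Polynomial.C γ₁)
      = Polynomial.C (lc * u ^ d)
          * (Polynomial.X ^ (d - 1 - k) * (Polynomial.X - 1) ^ k) := by
    rw [Polynomial.derivative_add, Polynomial.derivative_C, Polynomial.derivative_mul,
      Polynomial.derivative_C, Polynomial.derivative_add, Polynomial.derivative_mul,
      Polynomial.derivative_C, Polynomial.derivative_C, hdB]
    have huac : u * (a * c₀) = lc * u ^ d := by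
      have h1 : a * c₀ = lc * u ^ (d - 1) := div_mul_cancel₀ _ hc0
      have h2 : u ^ (d - 1) * u = u ^ d := by
        rw [← pow_succ]; congr 1; omega
      rw [h1, ← h2]; ring
    rw [← huac]
    simp only [Polynomial.C_mul]
    ring
  have hD : Polynomial.derivative
        (g.comp (Polynomial.C u * Polynomial.X + Polynomial.C γ₁)
          - (Polynomial.C u * (Polynomial.C a * B + Polynomial.C c) + Polynomial.C γ₁)) = 0 := by
    rw [Polynomial.derivative_sub, hcomp, hQ, sub_self]
  have hDC := Polynomial.eq_C_of_derivative_eq_zero hD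
  have hB0 : B.eval 0 = 0 := by
    rw [hBdef, belyiPolyK_eval]
    unfold belyiK
    refine Finset.sum_eq_zero fun i hi => ?_
    have : d - i ≠ 0 := by
      have := Nat.lt_succ_iff.mp (Finset.mem_range.mp hi); omega
    rw [zero_pow this, mul_zero]
  have h0 : (g.comp (Polynomial.C u * Polynomial.X + Polynomial.C γ₁)
      - (Polynomial.C u * (Polynomial.C a * B + Polynomial.C c) + Polynomial.C γ₁)).eval 0
      = 0 := by
    simp only [Polynomial.eval_sub, Polynomial.eval_comp, Polynomial.eval_add,
      Polynomial.eval_mul, Polynomial.eval_C, Polynomial.eval_X, mul_zero, zero_add, hB0]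
    rw [hc]
    field_simp
    ring
  have hzero : g.comp (Polynomial.C u * Polynomial.X + Polynomial.C γ₁)
      = Polynomial.C u * (Polynomial.C a * B + Polynomial.C c) + Polynomial.C γ₁ := by
    have := hDC
    rw [hDC] at h0
    rw [Polynomial.eval_C] at h0
    rw [h0, Polynomial.C_0] at this
    exact sub_eq_zero.mp this
  refine ⟨a, c, u, γ₁, ha0, hne, fun z => ?_⟩
  have := congrArg (Polynomial.eval z) hzero
  simpa only [Polynomial.eval_comp, Polynomial.eval_add, Polynomial.eval_mul,
    Polynomial.eval_C, Polynomial.eval_X, hBdef, belyiPolyK_eval] using this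


/-- (Belyi normal form for bicritical polynomials.)  Every bicritical
polynomial of degree `d ≥ 3` over an algebraically closed field of characteristic zero
is affinely conjugate to `a · B_{d,k}(z) + c` for some `1 ≤ k ≤ ⌈(d-2)/2⌉` and `a ≠ 0`. -/
theorem bicritical_belyi_normal_form (K : Type*) [Field K] [CharZero K] [IsAlgClosed K]
    [DecidableEq K]
    (d : ℕ) (hd : 3 ≤ d) (g : Polynomial K) (hdeg : g.natDegree = d)
    (hbc : g.derivative.roots.toFinset.card = 2) :
    ∃ k : ℕ, 1 ≤ k ∧ k ≤ (d - 1) / 2 ∧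
      ∃ a c u v : K, a ≠ 0 ∧ u ≠ 0 ∧
        ∀ z : K, g.eval (u * z + v) = u * (a * belyiK K d k z + c) + v := by
  have hgdeg_pos : 0 < g.natDegree := by omega
  have hdegd : g.derivative.degree = ((d - 1 : ℕ) : WithBot ℕ) := by
    rw [Polynomial.degree_derivative_eq g hgdeg_pos, hdeg]
  have hg'nd : g.derivative.natDegree = d - 1 := Polynomial.natDegree_eq_of_degree_eq_some hdegd
  have hg'ne : g.derivative ≠ 0 := by
    intro h
    rw [h, Polynomial.degree_zero] at hdegd
    exact (WithBot.bot_ne_coe) hdegd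
  have hsplit : Multiset.card g.derivative.roots = d - 1 := by
    rw [← hg'nd]
    exact Polynomial.splits_iff_card_roots.mp (IsAlgClosed.splits _)
  obtain ⟨γ₁, γ₂, hne, htf⟩ := Finset.card_eq_two.mp hbc
  set m₁ := g.derivative.roots.count γ₁ with hm₁def
  set m₂ := g.derivative.roots.count γ₂ with hm₂def
  have hmem₁ : γ₁ ∈ g.derivative.roots := by
    have : γ₁ ∈ g.derivative.roots.toFinset := htf ▸ Finset.mem_insert_self _ _
    exact Multiset.mem_toFinset.mp this
  have hmem₂ : γ₂ ∈ g.derivative.roots := by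
    have : γ₂ ∈ g.derivative.roots.toFinset := htf ▸ Finset.mem_insert_of_mem (Finset.mem_singleton_self _)
    exact Multiset.mem_toFinset.mp this
  have hdecomp : g.derivative.roots = m₁ • ({γ₁} : Multiset K) + m₂ • ({γ₂} : Multiset K) := by
    conv_lhs => rw [← Multiset.toFinset_sum_count_nsmul_eq g.derivative.roots]
    rw [htf, Finset.sum_insert (by simp [hne]), Finset.sum_singleton]
  have hcard : m₁ + m₂ = d - 1 := by
    have h := congrArg Multiset.card hdecomp
    rw [hsplit] at h
    simpa [Multiset.card_nsmul] using h.symm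
  have hm₁1 : 1 ≤ m₁ := Multiset.count_pos.mpr hmem₁
  have hm₂1 : 1 ≤ m₂ := Multiset.count_pos.mpr hmem₂
  have hlc : g.derivative.leadingCoeff ≠ 0 := Polynomial.leadingCoeff_ne_zero.mpr hg'ne
  have hfac : g.derivative = Polynomial.C g.derivative.leadingCoeff
      * ((Polynomial.X - Polynomial.C γ₁) ^ m₁ * (Polynomial.X - Polynomial.C γ₂) ^ m₂) := by
    conv_lhs => rw [← Polynomial.C_leadingCoeff_mul_prod_multiset_X_sub_C
      (p := g.derivative) (by rw [hsplit, hg'nd])]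
    rw [hdecomp]
    simp [Multiset.nsmul_singleton, Multiset.map_replicate, Multiset.prod_replicate]
  rcases le_total m₁ m₂ with hle | hle
  · refine ⟨m₁, hm₁1, by omega, ?_⟩
    apply belyi_aux K d hd g γ₂ γ₁ g.derivative.leadingCoeff hlc (sub_ne_zero.2 hne) m₁ hm₁1 (by omega)
    have h2 : d - 1 - m₁ = m₂ := by omega
    rw [h2]
    conv_lhs => rw [hfac]
    ring
  · refine ⟨m₂, hm₂1, by omega, ?_⟩
    apply belyi_aux K d hd g γ₁ γ₂ g.derivative.leadingCoeff hlc (sub_ne_zero.2 hne.symm) m₂ hm₂1 (by omega)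
    have h1 : d - 1 - m₂ = m₁ := by omega
    rw [h1]
    conv_lhs => rw [hfac]
end

section
/- For every integer d ≥ 5, there exists an IDF prime for the pair (d, 2); equivalently, there exists a prime p > 2 such that either p divides d, or p divides d−2 with v_p(d−2) odd. -/
open Finset Function

/-- For every `d ≥ 5` there exists an IDF prime for `(d, 2)`. -/
theorem exists_IDFPrime_k_eq_two (d : ℕ) (hd : 5 ≤ d) : ∃ p : ℕ, IsIDFPrime d 2 p := by
  by_cases h : ∃ p, p.Prime ∧ p ≠ 2 ∧ p ∣ d
  · -- some odd prime divides d: take r = 0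
    obtain ⟨p, hp, hp2, hpd⟩ := h
    have hple := hp.two_le
    refine ⟨p, hp, by omega, 0, by norm_num, by simpa using hpd, ?_⟩
    simp only [Nat.sub_zero, Nat.zero_dvd]
    rw [padicValNat.eq_zero_iff]
    push_neg
    exact ⟨hp.ne_one, by omega, hpd⟩
  · -- d is a power of 2
    push_neg at h
    have h2 : ∀ {q : ℕ}, q.Prime → q ∣ d → q = 2 := by
      intro q hq hqd
      by_contra hne
      exact h q hq hne hqd
    have hd0 : d ≠ 0 := by omega
    have hm := Nat.eq_prime_pow_of_unique_prime_dvd hd0 h2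
    set m := d.primeFactorsList.length with hmdef
    have hm3 : 3 ≤ m := by
      by_contra hlt
      interval_cases m <;> omega
    set t := 2 ^ (m - 1) - 1 with ht
    have hpow : 2 ^ m = 2 * 2 ^ (m - 1) := by
      rw [← pow_succ']
      congr 1
      omega
    have h4 : (4 : ℕ) ∣ 2 ^ (m - 1) := by
      refine ⟨2 ^ (m - 3), ?_⟩
      have : 2 ^ (m - 1) = 2 ^ 2 * 2 ^ (m - 3) := by
        rw [← pow_add]
        congr 1
        omega
      simpa using this
    have hpos : 4 ≤ 2 ^ (m - 1) := Nat.le_of_dvd (pow_pos (by norm_num) _) h4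
    obtain ⟨c, hc⟩ := h4
    have ht4 : t % 4 = 3 := by omega
    have htd : d - 2 = 2 * t := by omega
    obtain ⟨a, s, hab, ha⟩ := Nat.sq_mul_squarefree t
    have ht0 : t ≠ 0 := by omega
    have ha0 : a ≠ 0 := by
      rintro rfl
      simp at hab
      omega
    have hs0 : s ≠ 0 := by
      rintro rfl
      simp at hab
      omega
    have ha1 : a ≠ 1 := by
      rintro rfl
      rw [mul_one] at hab
      have hmod : s ^ 2 % 4 = (s % 4) ^ 2 % 4 := Nat.pow_mod s 2 4
      have hx : s % 4 = 0 ∨ s % 4 = 1 ∨ s % 4 = 2 ∨ s % 4 = 3 := by omega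
      rcases hx with hx | hx | hx | hx <;> rw [hx] at hmod <;> norm_num at hmod <;> omega
    obtain ⟨p, hp, hpa⟩ := Nat.exists_prime_and_dvd ha1
    have hple := hp.two_le
    have hpt : p ∣ t := hpa.trans ⟨s ^ 2, by rw [← hab]; ring⟩
    have hp2 : p ≠ 2 := by
      rintro rfl
      obtain ⟨u, hu⟩ := hpt
      omega
    haveI : Fact p.Prime := ⟨hp⟩
    have hvb : padicValNat p a = 1 := by
      have := Nat.factorization_eq_one_of_squarefree ha hp hpa
      rwa [Nat.factorization_def _ hp] at this
    have hpnd2 : ¬ p ∣ 2 := by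
      intro hdvd
      exact hp2 ((Nat.prime_dvd_prime_iff_eq hp Nat.prime_two).mp hdvd)
    have hval : padicValNat p (d - 2) = 2 * padicValNat p s + 1 := by
      rw [htd, padicValNat.mul two_ne_zero ht0, padicValNat.eq_zero_of_not_dvd hpnd2,
        ← hab, padicValNat.mul (pow_ne_zero _ hs0) ha0, padicValNat.pow s 2, hvb, zero_add]
    refine ⟨p, hp, by omega, 2, le_refl 2, ?_, ?_⟩
    · rw [htd]
      exact hpt.mul_left 2
    · rw [hval]
      omega
end

section
/- For every integer d ≥ 7 with d ≠ 27, there exists an IDF prime for the pair (d, 3); equivalently, there exists a prime p > 3 such that either p divides d, or p divides d−2 with v_p(d−2) odd, or p divides d−3 with 3 not dividing v_p(d−3). -/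
lemma aux_eq_pow_of_factorization_dvd {n c : ℕ} (hn : n ≠ 0)
    (h : ∀ p, p.Prime → p ∣ n → c ∣ n.factorization p) : ∃ m, n = m ^ c := by
  refine ⟨∏ p ∈ n.primeFactors, p ^ (n.factorization p / c), ?_⟩
  rw [← Finset.prod_pow]
  conv_lhs => rw [← Nat.factorization_prod_pow_eq_self hn,
    Nat.prod_factorization_eq_prod_primeFactors]
  apply Finset.prod_congr rfl
  intro p hp
  rw [← pow_mul, Nat.div_mul_cancel
    (h p (Nat.prime_of_mem_primeFactors hp) (Nat.dvd_of_mem_primeFactors hp))]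

lemma aux_two_three (n : ℕ) : n ≠ 0 → (∀ p, p.Prime → p ∣ n → p ≤ 3) →
    ∃ a b, n = 2 ^ a * 3 ^ b := by
  induction n using Nat.strong_induction_on with
  | _ n ih =>
    intro hn h
    rcases eq_or_ne n 1 with rfl | h1
    · exact ⟨0, 0, rfl⟩
    · have hp : n.minFac.Prime := Nat.minFac_prime h1
      have hdvd : n.minFac ∣ n := Nat.minFac_dvd n
      have hlt : n / n.minFac < n := Nat.div_lt_self (by omega) hp.one_lt
      have hne : n / n.minFac ≠ 0 :=
        (Nat.div_pos (Nat.minFac_le (by omega)) hp.pos).ne'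
      obtain ⟨a, b, hab⟩ := ih _ hlt hne (fun p pp pd => h p pp (pd.trans (Nat.div_dvd_of_dvd hdvd)))
      have h23 : n.minFac = 2 ∨ n.minFac = 3 := by
        have h3 := h _ hp hdvd; have h2 := hp.two_le
        rcases Nat.lt_or_ge n.minFac 3 with hl | hg
        · exact Or.inl (by omega)
        · exact Or.inr (by omega)
      have hn' : n = n.minFac * (n / n.minFac) := (Nat.mul_div_cancel' hdvd).symm
      rcases h23 with h2 | h3
      · exact ⟨a + 1, b, by rw [hn', hab, h2]; ring⟩
      · exact ⟨a, b + 1, by rw [hn', hab, h3]; ring⟩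

lemma aux_sq_mod8 (u : ℕ) : u ^ 2 % 8 = 0 ∨ u ^ 2 % 8 = 1 ∨ u ^ 2 % 8 = 4 := by
  have h : u ^ 2 % 8 = (u % 8) ^ 2 % 8 := Nat.pow_mod u 2 8
  have h8 : u % 8 < 8 := Nat.mod_lt u (by norm_num)
  set r := u % 8 with hr
  interval_cases r <;> omega

lemma aux_sq_mod9 (u : ℕ) :
    u ^ 2 % 9 = 0 ∨ u ^ 2 % 9 = 1 ∨ u ^ 2 % 9 = 4 ∨ u ^ 2 % 9 = 7 := by
  have h : u ^ 2 % 9 = (u % 9) ^ 2 % 9 := Nat.pow_mod u 2 9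
  have h9 : u % 9 < 9 := Nat.mod_lt u (by norm_num)
  set r := u % 9 with hr
  interval_cases r <;> omega

lemma aux_cube_mod9 (w : ℕ) : w ^ 3 % 9 = (w % 3) ^ 3 % 9 := by
  have hw : w = 3 * (w / 3) + w % 3 := (Nat.div_add_mod w 3).symm
  set q := w / 3
  set r := w % 3
  have key : (3 * q + r) ^ 3 = 9 * (3 * q ^ 3 + 3 * q ^ 2 * r + q * r ^ 2) + r ^ 3 := by ring
  rw [hw, key]
  omega

lemma aux_sq_two_pow {s u : ℕ} (hs : 2 ≤ s) (h : u ^ 2 = 2 ^ s + 1) : s = 3 := by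
  have hu_odd : u % 2 = 1 := by
    have h4 : (2:ℕ) ∣ 2 ^ s := dvd_pow_self 2 (by omega)
    have hsq : u ^ 2 % 2 = 1 := by omega
    have hpm : u ^ 2 % 2 = (u % 2) ^ 2 % 2 := Nat.pow_mod u 2 2
    have h2' : u % 2 < 2 := Nat.mod_lt u (by norm_num)
    set r := u % 2 with hr
    interval_cases r <;> omega
  have hu3 : 3 ≤ u := by
    have : 4 ≤ 2 ^ s := by calc (4:ℕ) = 2 ^ 2 := by norm_num
                                _ ≤ 2 ^ s := Nat.pow_le_pow_right (by norm_num) hs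
    nlinarith
  obtain ⟨u', rfl⟩ : ∃ u', u = u' + 1 := ⟨u - 1, by omega⟩
  have hfac : u' * (u' + 2) = 2 ^ s := by
    have : u' * (u' + 2) + 1 = (u' + 1) ^ 2 := by ring
    omega
  obtain ⟨i, hi, hieq⟩ := (Nat.dvd_prime_pow Nat.prime_two).mp ⟨u' + 2, hfac.symm⟩
  obtain ⟨j, hj, hjeq⟩ := (Nat.dvd_prime_pow Nat.prime_two).mp
    (⟨u', by rw [← hfac]; ring⟩ : (u' + 2) ∣ 2 ^ s)
  have hi1 : 1 ≤ i := by
    rcases Nat.eq_zero_or_pos i with rfl | h1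
    · simp at hieq; omega
    · omega
  have hj2 : 2 ≤ j := by
    rcases Nat.lt_or_ge j 2 with hl | hg
    · interval_cases j <;> omega
    · omega
  have hi1' : i = 1 := by
    rcases Nat.lt_or_ge i 2 with hl | hg
    · omega
    · exfalso
      have h4i : (4:ℕ) ∣ 2 ^ i := by
        calc (4:ℕ) = 2 ^ 2 := by norm_num
        _ ∣ 2 ^ i := pow_dvd_pow 2 hg
      have h4j : (4:ℕ) ∣ 2 ^ j := by
        calc (4:ℕ) = 2 ^ 2 := by norm_num
        _ ∣ 2 ^ j := pow_dvd_pow 2 hj2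
      omega
  have hu2 : u' = 2 := by rw [hi1'] at hieq; omega
  have : 2 ^ s = 2 ^ 3 := by rw [← hfac, hu2]; norm_num
  exact Nat.pow_right_injective (le_refl 2) this

lemma aux_rough_pow {n N c : ℕ} (hn : n ≠ 0) (hNd : N ∣ n)
    (hcop : Nat.Coprime N (n / N)) (h2 : ¬ 2 ∣ N) (h3 : ¬ 3 ∣ N)
    (h : ∀ p, p.Prime → 3 < p → p ∣ n → c ∣ n.factorization p) :
    ∃ u, N = u ^ c := by
  have hN0 : N ≠ 0 := by rintro rfl; exact hn (Nat.zero_dvd.mp hNd)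
  apply aux_eq_pow_of_factorization_dvd hN0
  intro p hp hpN
  have hp3 : 3 < p := by
    have h2le := hp.two_le
    have hne2 : p ≠ 2 := fun h => h2 (h ▸ hpN)
    have hne3 : p ≠ 3 := fun h => h3 (h ▸ hpN)
    rcases Nat.lt_or_ge p 4 with hl | hg
    · omega
    · omega
  have hpn : p ∣ n := hpN.trans hNd
  have hv := h p hp hp3 hpn
  have hn' : n = N * (n / N) := (Nat.mul_div_cancel' hNd).symm
  have hq0 : n / N ≠ 0 := by
    intro h0; rw [h0, Nat.mul_zero] at hn'; exact hn hn'
  rw [hn', Nat.factorization_mul hN0 hq0] at hv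
  have hz : (n / N).factorization p = 0 := by
    apply Nat.factorization_eq_zero_of_not_dvd
    intro hdq
    have : p ∣ Nat.gcd N (n / N) := Nat.dvd_gcd hpN hdq
    rw [hcop] at this
    have := Nat.eq_one_of_dvd_one this
    omega
  simpa [hz] using hv


def pellXY : ℕ → ℤ × ℤ
  | 0 => (1, 1)
  | k + 1 => (2 * (pellXY k).1 + 3 * (pellXY k).2, (pellXY k).1 + 2 * (pellXY k).2)

lemma pell_pos : ∀ k, 1 ≤ (pellXY k).1 ∧ 1 ≤ (pellXY k).2 := by
  intro k
  induction k with
  | zero => simp [pellXY]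
  | succ k ih => simp only [pellXY]; constructor <;> linarith [ih.1, ih.2]

lemma pell_inv : ∀ k, (pellXY k).1 ^ 2 + 2 = 3 * (pellXY k).2 ^ 2 := by
  intro k
  induction k with
  | zero => simp [pellXY]
  | succ k ih => simp only [pellXY]; linear_combination ih

lemma pell_step3 (k : ℕ) :
    (pellXY (k + 3)).1 = 26 * (pellXY k).1 + 45 * (pellXY k).2 ∧
    (pellXY (k + 3)).2 = 15 * (pellXY k).1 + 26 * (pellXY k).2 := by
  show (pellXY (k+1+1+1)).1 = _ ∧ (pellXY (k+1+1+1)).2 = _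
  simp only [pellXY]
  constructor <;> ring

lemma pell_mod3 : ∀ k, (3:ℤ) ∣ (pellXY k).2 → k % 3 = 1 := by
  intro k
  induction k using Nat.strong_induction_on with
  | _ k ih =>
    intro h
    match k, h with
    | 0, h => exfalso; norm_num [pellXY] at h
    | 1, h => rfl
    | 2, h => exfalso; norm_num [pellXY] at h
    | (j+3), h =>
      have hs := (pell_step3 j).2
      rw [hs] at h
      have h3 : (3:ℤ) ∣ (pellXY j).2 := by omega
      have := ih j (by omega) h3
      omega

lemma pell_triple : ∀ j,
    (pellXY (3 * j + 1)).1 = (pellXY j).1 * (6 * (pellXY j).2 ^ 2 - 1) ∧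
    (pellXY (3 * j + 1)).2 = 3 * (pellXY j).2 * (2 * (pellXY j).2 ^ 2 - 1) := by
  intro j
  induction j with
  | zero => norm_num [pellXY]
  | succ j ih =>
    have e1 : 3 * (j + 1) + 1 = (3 * j + 1) + 3 := by ring
    rw [e1]
    have hs := pell_step3 (3 * j + 1)
    have hinv := pell_inv j
    set x := (pellXY j).1
    set y := (pellXY j).2
    have hx1 : (pellXY (j+1)).1 = 2 * x + 3 * y := by simp [pellXY]; rfl
    have hy1 : (pellXY (j+1)).2 = x + 2 * y := by simp [pellXY]; rfl
    rw [hs.1, hs.2, ih.1, ih.2, hx1, hy1]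
    constructor
    · linear_combination (-12 * x - 66 * y) * hinv
    · linear_combination (-6 * x - 36 * y) * hinv

lemma pell_classify : ∀ (n : ℕ) (x y : ℤ), 1 ≤ x → 1 ≤ y → y.toNat ≤ n →
    x ^ 2 + 2 = 3 * y ^ 2 → ∃ k, x = (pellXY k).1 ∧ y = (pellXY k).2 := by
  intro n
  induction n with
  | zero => intro x y hx hy hyn _; omega
  | succ n ih =>
    intro x y hx hy hyn heq
    rcases eq_or_lt_of_le hy with h1 | h2
    · have hxsq : x ^ 2 = 1 := by rw [← h1] at heq; linarith
      have hx1 : x = 1 := by nlinarith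
      exact ⟨0, by simp [pellXY, hx1], by simp [pellXY, ← h1]⟩
    · -- y ≥ 2
      have hy2 : 2 ≤ y := h2
      have hxy : y < x := by nlinarith
      have h2x3y : 3 * y < 2 * x := by nlinarith
      have h2yx : x < 2 * y := by nlinarith
      set x' := 2 * x - 3 * y with hx'
      set y' := 2 * y - x with hy'
      have heq' : x' ^ 2 + 2 = 3 * y' ^ 2 := by
        rw [hx', hy']; linear_combination heq
      have hx'1 : 1 ≤ x' := by omega
      have hy'1 : 1 ≤ y' := by omega
      have hy'n : y'.toNat ≤ n := by omega
      obtain ⟨k, hk1, hk2⟩ := ih x' y' hx'1 hy'1 hy'n heq'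
      refine ⟨k + 1, ?_, ?_⟩ <;> simp only [pellXY, ← hk1, ← hk2] <;> omega

lemma pell_power3 (m u : ℕ) (hm : 2 ≤ m) : u ^ 2 + 2 ≠ 3 ^ (2 * m + 1) := by
  intro heq
  have hu1 : 1 ≤ u := by
    rcases Nat.eq_zero_or_pos u with rfl | h
    · have h3 : (3:ℕ) ∣ 3 ^ (2 * m + 1) := dvd_pow_self 3 (by omega)
      omega
    · exact h
  have heqZ : (u:ℤ) ^ 2 + 2 = 3 * ((3:ℤ) ^ m) ^ 2 := by
    have h1 : (3:ℕ) ^ (2 * m + 1) = 3 * (3 ^ m) ^ 2 := by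
      rw [pow_succ, ← pow_mul]; ring
    rw [h1] at heq
    exact_mod_cast heq
  have hy1 : (1:ℤ) ≤ 3 ^ m := one_le_pow₀ (by norm_num)
  obtain ⟨k, hk1, hk2⟩ := pell_classify ((3:ℤ)^m).toNat u (3^m)
    (by exact_mod_cast hu1) hy1 (le_refl _) heqZ
  have h3dvd : (3:ℤ) ∣ (pellXY k).2 := by
    rw [← hk2]
    exact dvd_pow_self 3 (by omega)
  obtain ⟨j, hj⟩ : ∃ j, k = 3 * j + 1 := ⟨k / 3, by have := pell_mod3 k h3dvd; omega⟩
  have htrip := (pell_triple j).2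
  rw [hj] at hk2
  rw [htrip] at hk2
  set z := (pellXY j).2 with hz
  have hz1 : 1 ≤ z := (pell_pos j).2
  -- convert to ℕ
  set t := z.toNat with ht
  have hzt : z = (t:ℤ) := by omega
  have ht1 : 1 ≤ t := by omega
  have hNeq : (3:ℕ) ^ m = 3 * t * (2 * t ^ 2 - 1) := by
    have h2t : 1 ≤ 2 * t ^ 2 := by nlinarith
    have : ((3 ^ m : ℕ) : ℤ) = ((3 * t * (2 * t ^ 2 - 1) : ℕ) : ℤ) := by
      push_cast [Nat.cast_sub h2t]
      rw [hk2, hzt]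
    exact_mod_cast this
  have hcancel : 3 ^ (m - 1) = t * (2 * t ^ 2 - 1) := by
    have h3m : (3:ℕ) ^ m = 3 * 3 ^ (m - 1) := by
      rw [← pow_succ']; congr 1; omega
    rw [h3m] at hNeq
    have := Nat.eq_of_mul_eq_mul_left (show 0 < 3 by norm_num)
      (by linarith [hNeq] : 3 * 3 ^ (m-1) = 3 * (t * (2 * t ^ 2 - 1)))
    exact this
  have htd : t ∣ 3 ^ (m - 1) := ⟨_, hcancel⟩
  have hqd : (2 * t ^ 2 - 1) ∣ 3 ^ (m - 1) := ⟨t, by rw [hcancel]; ring⟩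
  obtain ⟨i, hi, hieq⟩ := (Nat.dvd_prime_pow Nat.prime_three).mp htd
  rcases Nat.eq_zero_or_pos i with rfl | hipos
  · -- t = 1
    rw [pow_zero] at hieq
    rw [hieq] at hcancel
    have hc1 : 3 ^ (m - 1) = 2 * 1 ^ 2 - 1 := by rw [hcancel]; ring_nf
    have : 3 ≤ 3 ^ (m - 1) := by
      calc (3:ℕ) = 3 ^ 1 := by norm_num
      _ ≤ 3 ^ (m - 1) := Nat.pow_le_pow_right (by norm_num) (by omega)
    norm_num at hc1
    omega
  · -- 3 ∣ t
    have h3t : 3 ∣ t := by rw [hieq]; exact dvd_pow_self 3 (by omega)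
    obtain ⟨i', hi', hieq'⟩ := (Nat.dvd_prime_pow Nat.prime_three).mp hqd
    rcases Nat.eq_zero_or_pos i' with rfl | hipos'
    · rw [pow_zero] at hieq'
      -- 2 t^2 - 1 = 1 with t ≥ 1 forces t = 1, contradicting 3 ∣ t
      have ht2 : t = 1 := by
        rcases Nat.lt_or_ge t 2 with hl | hg
        · omega
        · exfalso
          have : 2 ^ 2 ≤ t ^ 2 := Nat.pow_le_pow_left hg 2
          omega
      rw [ht2] at h3t
      omega
    · have h3q : 3 ∣ 2 * t ^ 2 - 1 := by rw [hieq']; exact dvd_pow_self 3 (by omega)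
      have h3t2 : 3 ∣ 2 * t ^ 2 := by
        have h1 : (3:ℕ) ∣ t * t := Dvd.dvd.mul_right h3t t
        have ht2 : t ^ 2 = t * t := sq t
        rw [ht2]
        exact Dvd.dvd.mul_left h1 2
      have h2t1 : 1 ≤ 2 * t ^ 2 := by
        have := Nat.one_le_pow 2 t (by omega)
        omega
      omega
lemma aux_sq_half {d N : ℕ} (h5 : 5 ≤ d) (hd2 : d - 2 = 2 * N) (h2 : ¬ 2 ∣ N) (h3 : ¬ 3 ∣ N)
    (hB : ∀ p, p.Prime → 3 < p → p ∣ d - 2 → 2 ∣ (d - 2).factorization p) :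
    ∃ u, N = u ^ 2 := by
  have hN0 : 0 < N := by omega
  have hn : d - 2 ≠ 0 := by omega
  have hNd : N ∣ d - 2 := ⟨2, by rw [hd2]; ring⟩
  have hq : (d - 2) / N = 2 := by rw [hd2, mul_comm, Nat.mul_div_cancel_left _ hN0]
  have hcop : Nat.Coprime N ((d - 2) / N) := by
    rw [hq]
    exact ((Nat.Prime.coprime_iff_not_dvd Nat.prime_two).mpr h2).symm
  exact aux_rough_pow hn hNd hcop h2 h3 hB

open Finset Function

/-- For every `d ≥ 7` with `d ≠ 27` there exists an IDF prime for
`(d, 3)`. -/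
theorem exists_IDFPrime_k_eq_three (d : ℕ) (hd : 7 ≤ d) (hd27 : d ≠ 27) :
    ∃ p : ℕ, IsIDFPrime d 3 p := by
  by_contra hcon
  push_neg at hcon
  have d0 : d ≠ 0 := by omega
  have key : ∀ p, p.Prime → 3 < p → ∀ r, r ≤ 3 → p ∣ d - r →
      r ∣ padicValNat p (d - r) := by
    intro p hp h3 r hr hdvd
    by_contra hv
    exact hcon p ⟨hp, h3, r, hr, hdvd, hv⟩
  have hA : ∀ p, p.Prime → p ∣ d → p ≤ 3 := by
    intro p hp hpd
    by_contra h
    push_neg at h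
    have h0 := key p hp h 0 (by norm_num) (by simpa using hpd)
    rw [Nat.sub_zero, Nat.zero_dvd] at h0
    have hpos := hp.factorization_pos_of_dvd d0 hpd
    rw [Nat.factorization_def d hp] at hpos
    omega
  have hB : ∀ p, p.Prime → 3 < p → p ∣ d - 2 → 2 ∣ (d - 2).factorization p := by
    intro p hp h3 hdvd
    rw [Nat.factorization_def _ hp]
    exact key p hp h3 2 (by norm_num) hdvd
  have hC : ∀ p, p.Prime → 3 < p → p ∣ d - 3 → 3 ∣ (d - 3).factorization p := by
    intro p hp h3 hdvd
    rw [Nat.factorization_def _ hp]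
    exact key p hp h3 3 (by norm_num) hdvd
  obtain ⟨a, b, hab⟩ := aux_two_three d d0 hA
  rcases a with _ | _ | a2
  · -- a = 0 : d = 3 ^ b
    have hab' : d = 3 ^ b := by simpa using hab
    have hb2 : 2 ≤ b := by
      by_contra h
      push_neg at h
      interval_cases b <;> norm_num at hab' <;> omega
    have hodd : 3 ^ b % 2 = 1 := by rw [Nat.pow_mod]; norm_num
    have h3d : (3:ℕ) ∣ d := by rw [hab']; exact dvd_pow_self 3 (by omega)
    have hN2 : ¬ 2 ∣ (d - 2) := by omega
    have hN3 : ¬ 3 ∣ (d - 2) := by omega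
    have hq : (d - 2) / (d - 2) = 1 := Nat.div_self (by omega)
    obtain ⟨u, hu⟩ := aux_rough_pow (n := d - 2) (N := d - 2) (by omega) dvd_rfl
      (by rw [hq]; exact Nat.coprime_one_right _) hN2 hN3 hB
    have hueq : u ^ 2 + 2 = 3 ^ b := by omega
    rcases Nat.even_or_odd b with ⟨m, hbm⟩ | ⟨m, hbm⟩
    · -- b even
      have h8 : 3 ^ b % 8 = 1 := by
        rw [hbm, show m + m = 2 * m by ring, pow_mul, Nat.pow_mod]
        norm_num
      have := aux_sq_mod8 u
      omega
    · -- b odd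
      have hbne3 : b ≠ 3 := by
        intro h
        apply hd27
        rw [hab', h]; norm_num
      have hm2 : 2 ≤ m := by omega
      exact pell_power3 m u hm2 (by rw [← hbm]; exact hueq)
  · -- a = 1 : d = 2 * 3 ^ b
    have hab' : d = 2 * 3 ^ b := by rw [hab]; ring
    have hb2 : 2 ≤ b := by
      by_contra h
      push_neg at h
      interval_cases b <;> norm_num at hab' <;> omega
    have hpowb : (3:ℕ) ^ b = 3 ^ (b - 1) * 3 := by
      rw [← pow_succ]; congr 1; omega
    obtain ⟨X, hX⟩ : ∃ X, 2 * 3 ^ (b - 1) = X := ⟨_, rfl⟩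
    have hXd : d = 3 * X := by rw [hab', hpowb, ← hX]; ring
    have h3pow : 3 ≤ 3 ^ (b - 1) := by
      calc (3:ℕ) = 3 ^ 1 := by norm_num
      _ ≤ 3 ^ (b - 1) := Nat.pow_le_pow_right (by norm_num) (by omega)
    have hX6 : 6 ≤ X := by omega
    obtain ⟨M, hM⟩ : ∃ M, X - 1 = M := ⟨_, rfl⟩
    have hd3 : d - 3 = 3 * M := by omega
    have h2X : 2 ∣ X := by rw [← hX]; exact ⟨3 ^ (b - 1), rfl⟩
    have h3X : 3 ∣ X := by rw [← hX]; exact Dvd.dvd.mul_left (dvd_pow_self 3 (by omega)) 2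
    have hM2 : ¬ 2 ∣ M := by omega
    have hM3 : ¬ 3 ∣ M := by omega
    have hMd : M ∣ d - 3 := ⟨3, by rw [hd3]; ring⟩
    have hquot : (d - 3) / M = 3 := by
      rw [hd3, mul_comm, Nat.mul_div_cancel_left _ (by omega : 0 < M)]
    have hcop : Nat.Coprime M ((d - 3) / M) := by
      rw [hquot]
      exact ((Nat.Prime.coprime_iff_not_dvd Nat.prime_three).mpr hM3).symm
    obtain ⟨w, hw⟩ := aux_rough_pow (by omega : d - 3 ≠ 0) hMd hcop hM2 hM3 hC
    rcases eq_or_lt_of_le hb2 with hb2' | hb3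
    · -- b = 2, M = 5
      have hX6' : X = 6 := by rw [← hX, ← hb2']; norm_num
      have hw5 : w ^ 3 = 5 := by omega
      rcases Nat.lt_or_ge w 2 with h | h
      · interval_cases w <;> norm_num at hw5
      · have : 2 ^ 3 ≤ w ^ 3 := Nat.pow_le_pow_left h 3
        norm_num at this
        omega
    · -- b ≥ 3
      have h9X : 9 ∣ X := by
        have h9 : (9:ℕ) ∣ 3 ^ (b - 1) := by
          calc (9:ℕ) = 3 ^ 2 := by norm_num
          _ ∣ 3 ^ (b - 1) := pow_dvd_pow 3 (by omega)
        rw [← hX]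
        exact Dvd.dvd.mul_left h9 2
      have hw9 : w ^ 3 % 9 = 8 := by omega
      have hw3 : w % 3 = 2 := by
        have hcm := aux_cube_mod9 w
        have hlt : w % 3 < 3 := Nat.mod_lt w (by norm_num)
        set r := w % 3 with hr
        interval_cases r <;> norm_num at hcm <;> omega
      obtain ⟨v, hv⟩ : ∃ v, w = 3 * v + 2 := ⟨w / 3, by omega⟩
      rw [hv] at hw
      obtain ⟨c, hc⟩ : ∃ c, 3 * v ^ 2 + 3 * v + 1 = c := ⟨_, rfl⟩
      have hrng : (3 * v + 2) ^ 3 + 1 = 9 * ((v + 1) * c) := by rw [← hc]; ring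
      have hkey : X = 9 * ((v + 1) * c) := by omega
      have hcc : c = 3 * (v * (v + 1)) + 1 := by rw [← hc]; ring
      have hvv : 2 ∣ v * (v + 1) := (Nat.even_mul_succ_self v).two_dvd
      have hceven : ¬ 2 ∣ c := by omega
      have hc3 : ¬ 3 ∣ c := by omega
      have hcd : c ∣ 2 * 3 ^ (b - 1) := ⟨9 * (v + 1), by rw [hX, hkey]; ring⟩
      have hcd3 : c ∣ 3 ^ (b - 1) :=
        Nat.Coprime.dvd_of_dvd_mul_left
          (((Nat.Prime.coprime_iff_not_dvd Nat.prime_two).mpr hceven).symm) hcd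
      obtain ⟨i, hi, hieq⟩ := (Nat.dvd_prime_pow Nat.prime_three).mp hcd3
      have hi0 : i = 0 := by
        by_contra h
        exact hc3 (by rw [hieq]; exact dvd_pow_self 3 h)
      rw [hi0, pow_zero] at hieq
      have hv0 : v = 0 := by omega
      rw [hv0, hieq] at hkey
      norm_num at hkey
      omega
  · -- a = a2 + 2 ≥ 2
    rcases b with _ | b1
    · -- b = 0 : d = 2 ^ (a2 + 2)
      have hab' : d = 2 ^ (a2 + 2) := by simpa using hab
      rcases a2 with _ | _ | a3
      · -- d = 4, contradiction with d ≥ 7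
        norm_num at hab'
        omega
      · -- d = 8 : direct IDF prime p = 5 for r = 3
        have hd8 : d = 8 := by norm_num at hab'; omega
        have h5 := key 5 (by norm_num) (by norm_num) 3 (by norm_num)
          (by rw [hd8])
        rw [hd8] at h5
        have hval : padicValNat 5 (8 - 3) = 1 := by
          show padicValNat 5 5 = 1
          exact padicValNat.self (by norm_num)
        rw [hval] at h5
        omega
      · -- d = 2 ^ (a3 + 4)
        have hab2 : d = 2 ^ (a3 + 4) := by rw [hab']
        have hdd : d = 2 * 2 ^ (a3 + 3) := by rw [hab2, pow_succ]; ring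
        obtain ⟨P, hP⟩ : ∃ P, 2 ^ (a3 + 3) = P := ⟨_, rfl⟩
        rw [hP] at hdd
        have h2P : 2 ∣ P := by rw [← hP]; exact dvd_pow_self 2 (by omega)
        have h4P : 4 ∣ P := by
          rw [← hP]
          calc (4:ℕ) = 2 ^ 2 := by norm_num
          _ ∣ 2 ^ (a3 + 3) := pow_dvd_pow 2 (by omega)
        have h8P : 8 ≤ P := by
          rw [← hP]
          calc (8:ℕ) = 2 ^ 3 := by norm_num
          _ ≤ 2 ^ (a3 + 3) := Nat.pow_le_pow_right (by norm_num) (by omega)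
        obtain ⟨N, hN⟩ : ∃ N, P - 1 = N := ⟨_, rfl⟩
        have hd2 : d - 2 = 2 * N := by omega
        have hN2 : ¬ 2 ∣ N := by omega
        rcases Nat.even_or_odd a3 with ⟨m, hm⟩ | ⟨m, hm⟩
        · -- a3 even : exponent a3 + 3 odd, so 3 ∤ N, N is a square ≡ 3 mod 4
          have hPm : P = 4 ^ (m + 1) * 2 := by
            rw [← hP, hm, show m + m + 3 = 2 * (m + 1) + 1 by ring, pow_succ, pow_mul]
            norm_num
          have h43 : 4 ^ (m + 1) % 3 = 1 := by rw [Nat.pow_mod]; norm_num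
          have hN3 : ¬ 3 ∣ N := by omega
          obtain ⟨u, hu⟩ := aux_sq_half (by omega) hd2 hN2 hN3 hB
          have := aux_sq_mod8 u
          omega
        · -- a3 odd : a3 + 3 = 2 * s with s = m + 2
          have hts : P = 2 ^ (m + 2) * 2 ^ (m + 2) := by
            rw [← hP, ← pow_add]
            congr 1
            omega
          have h4s : 4 ≤ 2 ^ (m + 2) := by
            calc (4:ℕ) = 2 ^ 2 := by norm_num
            _ ≤ 2 ^ (m + 2) := Nat.pow_le_pow_right (by norm_num) (by omega)
          have h2s : 2 ∣ 2 ^ (m + 2) := dvd_pow_self 2 (by omega)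
          obtain ⟨F1, hF1⟩ : ∃ F1, 2 ^ (m + 2) - 1 = F1 := ⟨_, rfl⟩
          obtain ⟨F2, hF2⟩ : ∃ F2, 2 ^ (m + 2) + 1 = F2 := ⟨_, rfl⟩
          obtain ⟨t0, ht0⟩ : ∃ t0, 2 ^ (m + 2) = t0 + 1 := ⟨2 ^ (m + 2) - 1, by omega⟩
          have hprod : F1 * F2 + 1 = P := by
            rw [hts, ← hF1, ← hF2, ht0, show t0 + 1 - 1 = t0 by omega]
            ring
          have hF1o : ¬ 2 ∣ F1 := by omega
          have hF2o : ¬ 2 ∣ F2 := by omega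
          have hcopF : Nat.Coprime F1 F2 := by
            have hg2 : Nat.gcd F1 F2 ∣ 2 := by
              have h1 := Nat.gcd_dvd_left F1 F2
              have h2 := Nat.gcd_dvd_right F1 F2
              have h3 := Nat.dvd_sub h2 h1
              rw [show F2 - F1 = 2 by omega] at h3
              exact h3
            rcases (Nat.dvd_prime Nat.prime_two).mp hg2 with h | h
            · exact h
            · exfalso
              have := Nat.gcd_dvd_left F1 F2
              rw [h] at this
              exact hF1o this
          have hdN : d - 2 = 2 * (F1 * F2) := by omega
          rcases Nat.even_or_odd (m + 2) with ⟨m2, hm2⟩ | ⟨m2, hm2⟩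
          · -- exponent even : 3 ∣ F1, F2 is a square 2^s + 1 → s = 3, odd : contra
            have hsm : 2 ^ (m + 2) = 4 ^ m2 := by
              rw [hm2, show m2 + m2 = 2 * m2 by ring, pow_mul]
              norm_num
            have h43 : 4 ^ m2 % 3 = 1 := by rw [Nat.pow_mod]; norm_num
            have hF23 : ¬ 3 ∣ F2 := by omega
            have hF2d : F2 ∣ d - 2 := ⟨2 * F1, by rw [hdN]; ring⟩
            have hq2 : (d - 2) / F2 = 2 * F1 := by
              rw [show d - 2 = F2 * (2 * F1) by rw [hdN]; ring,
                Nat.mul_div_cancel_left _ (by omega : 0 < F2)]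
            have hcop2 : Nat.Coprime F2 ((d - 2) / F2) := by
              rw [hq2]
              exact Nat.Coprime.mul_right
                (((Nat.Prime.coprime_iff_not_dvd Nat.prime_two).mpr hF2o).symm)
                hcopF.symm
            obtain ⟨u, hu⟩ := aux_rough_pow (by omega : d - 2 ≠ 0) hF2d hcop2 hF2o hF23 hB
            have hs3 := aux_sq_two_pow (by omega : 2 ≤ m + 2)
              (by omega : u ^ 2 = 2 ^ (m + 2) + 1)
            omega
          · -- exponent odd : 3 ∣ F2, F1 is a square ≡ 3 mod 4 : contra
            have hsm : 2 ^ (m + 2) = 4 ^ m2 * 2 := by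
              rw [hm2, pow_succ, pow_mul]
              norm_num
            have h43 : 4 ^ m2 % 3 = 1 := by rw [Nat.pow_mod]; norm_num
            have hF13 : ¬ 3 ∣ F1 := by omega
            have hF1d : F1 ∣ d - 2 := ⟨2 * F2, by rw [hdN]; ring⟩
            have hq2 : (d - 2) / F1 = 2 * F2 := by
              rw [show d - 2 = F1 * (2 * F2) by rw [hdN]; ring,
                Nat.mul_div_cancel_left _ (by omega : 0 < F1)]
            have hcop2 : Nat.Coprime F1 ((d - 2) / F1) := by
              rw [hq2]
              exact Nat.Coprime.mul_right
                (((Nat.Prime.coprime_iff_not_dvd Nat.prime_two).mpr hF1o).symm)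
                hcopF
            obtain ⟨u, hu⟩ := aux_rough_pow (by omega : d - 2 ≠ 0) hF1d hcop2 hF1o hF13 hB
            have h4d : (4:ℕ) ∣ 2 ^ (m + 2) := by
              calc (4:ℕ) = 2 ^ 2 := by norm_num
              _ ∣ 2 ^ (m + 2) := pow_dvd_pow 2 (by omega)
            have := aux_sq_mod8 u
            omega
    · -- b = b1 + 1 ≥ 1
      obtain ⟨X, hX⟩ : ∃ X, 2 ^ (a2 + 1) * 3 ^ (b1 + 1) = X := ⟨_, rfl⟩
      have hdd : d = 2 * X := by
        rw [hab, ← hX, pow_succ]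
        ring
      have h2X : 2 ∣ X := by
        rw [← hX]
        exact Dvd.dvd.mul_right (dvd_pow_self 2 (by omega)) _
      have h3X : 3 ∣ X := by
        rw [← hX]
        exact Dvd.dvd.mul_left (dvd_pow_self 3 (by omega)) _
      have hX4 : 4 ≤ X := by omega
      obtain ⟨N, hN⟩ : ∃ N, X - 1 = N := ⟨_, rfl⟩
      have hd2 : d - 2 = 2 * N := by omega
      have hN2 : ¬ 2 ∣ N := by omega
      have hN3 : ¬ 3 ∣ N := by omega
      obtain ⟨u, hu⟩ := aux_sq_half (by omega) hd2 hN2 hN3 hB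
      have hsq8 := aux_sq_mod8 u
      rcases a2 with _ | a3
      · -- a = 2 : X = 2 * 3 ^ (b1 + 1)
        have hX2 : X = 2 * 3 ^ (b1 + 1) := by rw [← hX]; norm_num
        rcases b1 with _ | b2
        · -- b = 1 : N = 5
          have : X = 6 := by rw [hX2]; norm_num
          omega
        · -- b ≥ 2 : N ≡ 8 mod 9
          have h9 : (9:ℕ) ∣ 3 ^ (b2 + 2) := by
            calc (9:ℕ) = 3 ^ 2 := by norm_num
            _ ∣ 3 ^ (b2 + 2) := pow_dvd_pow 3 (by omega)
          have h9X : 9 ∣ X := by rw [hX2]; exact Dvd.dvd.mul_left h9 2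
          have hsq9 := aux_sq_mod9 u
          omega
      · -- a ≥ 3 : N ≡ 3 mod 4
        have h4X : 4 ∣ X := by
          rw [← hX]
          refine Dvd.dvd.mul_right ?_ _
          calc (4:ℕ) = 2 ^ 2 := by norm_num
          _ ∣ 2 ^ (a3 + 1 + 1) := pow_dvd_pow 2 (by omega)
        omega
end
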